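/- The opposite-colour merge and split operators satisfy the bialgebra law: as linear maps from ℂ²⊗ℂ² to ℂ²⊗ℂ², K_{H,0}†·K_{V,0} = √2·(K_{V,0}⊗K_{V,0})·(1⊗SWAP⊗1)·(K_{H,0}†⊗K_{H,0}†). -/

import Mathlib

open Matrix Kronecker

noncomputable section

/-- The computational basis state `|0⟩` of a qubit. -/
def ket0 : Fin 2 → ℂ := fun i => if i = 0 then 1 else 0
/-- The computational basis state `|1⟩` of a qubit. -/
def ket1 : Fin 2 → ℂ := fun i => if i = 1 then 1 else 0
/-- The state `|+⟩ = (|0⟩ + |1⟩)/√2`. -/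
def ketP : Fin 2 → ℂ := (Real.sqrt 2 : ℂ)⁻¹ • (ket0 + ket1)
/-- The state `|−⟩ = (|0⟩ − |1⟩)/√2`. -/
def ketM : Fin 2 → ℂ := (Real.sqrt 2 : ℂ)⁻¹ • (ket0 - ket1)

/-- The outer product `|ψ⟩⟨φ|` as a 2×2 matrix. -/
def outer (ψ φ : Fin 2 → ℂ) : Matrix (Fin 2) (Fin 2) ℂ :=
  fun i j => ψ i * star (φ j)

/-- The outer product `|ψ⟩⟨φχ|` as a linear map `ℂ²⊗ℂ² → ℂ²` (a 2×4 matrix,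
with columns indexed by the Kronecker-product basis of `ℂ²⊗ℂ²`). -/
def outerM (ψ φ χ : Fin 2 → ℂ) : Matrix (Fin 2) (Fin 2 × Fin 2) ℂ :=
  fun i p => ψ i * star (φ p.1 * χ p.2)

/-- The bra `⟨ψ|` as a linear functional `ℂ² → ℂ` (a 1×2 matrix). -/
def braM (ψ : Fin 2 → ℂ) : Matrix (Fin 1) (Fin 2) ℂ := fun _ j => star (ψ j)

/-- `K_{H,0} = |0⟩⟨00| + |1⟩⟨11|`. -/
def KH0 : Matrix (Fin 2) (Fin 2 × Fin 2) ℂ := outerM ket0 ket0 ket0 + outerM ket1 ket1 ket1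
/-- `K_{H,1} = |0⟩⟨01| + |1⟩⟨10|`. -/
def KH1 : Matrix (Fin 2) (Fin 2 × Fin 2) ℂ := outerM ket0 ket0 ket1 + outerM ket1 ket1 ket0
/-- `K_{V,0} = |+⟩⟨++| + |−⟩⟨−−|`. -/
def KV0 : Matrix (Fin 2) (Fin 2 × Fin 2) ℂ := outerM ketP ketP ketP + outerM ketM ketM ketM
/-- `K_{V,1} = |+⟩⟨+−| + |−⟩⟨−+|`. -/
def KV1 : Matrix (Fin 2) (Fin 2 × Fin 2) ℂ := outerM ketP ketP ketM + outerM ketM ketM ketP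

/-- `A_{H,0} = ⟨0|`. -/
def AH0 : Matrix (Fin 1) (Fin 2) ℂ := braM ket0
/-- `A_{H,1} = ⟨1|`. -/
def AH1 : Matrix (Fin 1) (Fin 2) ℂ := braM ket1
/-- `A_{V,0} = ⟨+|`. -/
def AV0 : Matrix (Fin 1) (Fin 2) ℂ := braM ketP
/-- `A_{V,1} = ⟨−|`. -/
def AV1 : Matrix (Fin 1) (Fin 2) ℂ := braM ketM

/-- The Pauli `X` matrix `|0⟩⟨1| + |1⟩⟨0|`. -/
def PX : Matrix (Fin 2) (Fin 2) ℂ := outer ket0 ket1 + outer ket1 ket0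
/-- The Pauli `Z` matrix `|0⟩⟨0| − |1⟩⟨1|`. -/
def PZ : Matrix (Fin 2) (Fin 2) ℂ := outer ket0 ket0 - outer ket1 ket1

/-- The SWAP map on `ℂ²⊗ℂ²`, satisfying `SWAP(ψ⊗φ) = φ⊗ψ`. -/
def SWAP : Matrix (Fin 2 × Fin 2) (Fin 2 × Fin 2) ℂ :=
  fun p q => if q = (p.2, p.1) then 1 else 0

/-- The canonical regrouping `(ℂ²⊗(ℂ²⊗ℂ²))⊗ℂ² ≃ (ℂ²⊗ℂ²)⊗(ℂ²⊗ℂ²)` of index types,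
used to read `1⊗SWAP⊗1` as a map on `(ℂ²⊗ℂ²)⊗(ℂ²⊗ℂ²)`. -/
def regroup : ((Fin 2 × (Fin 2 × Fin 2)) × Fin 2) ≃ ((Fin 2 × Fin 2) × (Fin 2 × Fin 2)) where
  toFun p := ((p.1.1, p.1.2.1), (p.1.2.2, p.2))
  invFun p := ((p.1.1, (p.1.2, p.2.1)), p.2.2)
  left_inv _ := rfl
  right_inv _ := rfl

set_option maxHeartbeats 1000000

lemma KV0_eq : KV0 = fun i p =>
    if (i.val + p.1.val + p.2.val) % 2 = 0 then ((Real.sqrt 2 : ℝ) : ℂ)⁻¹ else 0 := by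
  have h2 : ((Real.sqrt 2 : ℝ) : ℂ) * ((Real.sqrt 2 : ℝ) : ℂ) = 2 := by
    exact_mod_cast Real.mul_self_sqrt (by norm_num)
  have hne : ((Real.sqrt 2 : ℝ) : ℂ) ≠ 0 := by
    intro h; rw [h, mul_zero] at h2; norm_num at h2
  funext i p
  obtain ⟨j, k⟩ := p
  fin_cases i <;> fin_cases j <;> fin_cases k <;>
    simp [KV0, outerM, ket0, ket1, ketP, ketM, Pi.add_apply, Pi.sub_apply, Pi.smul_apply,
      smul_eq_mul, Complex.star_def, map_inv₀, Complex.conj_ofReal]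
  all_goals field_simp
  all_goals grind

lemma KH0_eq : KH0 = fun i p => if i = p.1 ∧ p.1 = p.2 then 1 else 0 := by
  funext i p
  obtain ⟨j, k⟩ := p
  fin_cases i <;> fin_cases j <;> fin_cases k <;>
    simp [KH0, outerM, ket0, ket1]

/-- The opposite-colour merge and split operators satisfy the bialgebra law:
`K_{H,0}†·K_{V,0} = √2·(K_{V,0}⊗K_{V,0})·(1⊗SWAP⊗1)·(K_{H,0}†⊗K_{H,0}†)`. -/
theorem merge_split_bialgebra :
    KH0ᴴ * KV0
      = (Real.sqrt 2 : ℂ) •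
        ((KV0 ⊗ₖ KV0)
          * Matrix.reindex regroup regroup
              (((1 : Matrix (Fin 2) (Fin 2) ℂ) ⊗ₖ SWAP) ⊗ₖ (1 : Matrix (Fin 2) (Fin 2) ℂ))
          * (KH0ᴴ ⊗ₖ KH0ᴴ)) := by
  have h2 : ((Real.sqrt 2 : ℝ) : ℂ) * ((Real.sqrt 2 : ℝ) : ℂ) = 2 := by
    exact_mod_cast Real.mul_self_sqrt (by norm_num)
  have hne : ((Real.sqrt 2 : ℝ) : ℂ) ≠ 0 := by
    intro h
    rw [h, mul_zero] at h2
    norm_num at h2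
  ext ⟨i, j⟩ ⟨k, l⟩
  simp [SWAP, regroup, Matrix.mul_apply,
      Matrix.kroneckerMap_apply, Fintype.sum_prod_type, Fin.sum_univ_two, Matrix.reindex_apply, Matrix.submatrix_apply, Matrix.conjTranspose_apply,
      Matrix.one_apply, Pi.add_apply, Pi.sub_apply, Pi.smul_apply, smul_eq_mul]
  rw [KV0_eq, KH0_eq]
  fin_cases i <;> fin_cases j <;> fin_cases k <;> fin_cases l <;> simp
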